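/- For all positive integers n and m with m ≥ ⌈(n−1)/2⌉, f₃(n,m) ≤ ⌊(n+1)/2⌋. -/

import Mathlib

open Finset

/-- The union of the first `k` sets in the ordering `π` (positions `1,…,k`,
i.e. 0-based indices `< k`). -/
def unionUpTo {α : Type*} [DecidableEq α] {m : ℕ} (X : Fin m → Finset α)
    (π : Equiv.Perm (Fin m)) (k : ℕ) : Finset α :=
  (Finset.univ.filter (fun i : Fin m => (i : ℕ) < k)).biUnion (fun i => X (π i))

/-- `Δ(𝒳,π,k) = |X_{π(1)} ∪ ⋯ ∪ X_{π(k)}| − k`. -/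
def delta {α : Type*} [DecidableEq α] {m : ℕ} (X : Fin m → Finset α)
    (π : Equiv.Perm (Fin m)) (k : ℕ) : ℤ :=
  ((unionUpTo X π k).card : ℤ) - k

/-- `Δ(𝒳,π) = max_{1 ≤ k ≤ m} Δ(𝒳,π,k)`. -/
noncomputable def DeltaPerm {α : Type*} [DecidableEq α] {m : ℕ} (X : Fin m → Finset α)
    (π : Equiv.Perm (Fin m)) : ℤ :=
  sSup {d : ℤ | ∃ k : ℕ, 1 ≤ k ∧ k ≤ m ∧ d = delta X π k}

/-- `Δ(𝒳) = min_π Δ(𝒳,π)`. -/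
noncomputable def DeltaMin {α : Type*} [DecidableEq α] {m : ℕ} (X : Fin m → Finset α) : ℤ :=
  sInf {d : ℤ | ∃ π : Equiv.Perm (Fin m), d = DeltaPerm X π}

/-- `f_c(n,m) = max_{𝒳 ∈ S(n,m,c)} Δ(𝒳)`, families of `m` subsets of an
`n`-element ground set, each of size at most `c`. -/
noncomputable def fFam (n m c : ℕ) : ℤ :=
  sSup {d : ℤ | ∃ X : Fin m → Finset (Fin n), (∀ i, (X i).card ≤ c) ∧ d = DeltaMin X}


section AuxProof
set_option linter.unusedSectionVars false
set_option maxHeartbeats 800000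

variable {α ι : Type*} [DecidableEq α] [DecidableEq ι]

private lemma sum_filter_card_eq (X : ι → Finset α) (s : Finset ι) (V : Finset α) :
    ∑ i ∈ s, (V.filter (fun a => a ∈ X i)).card
      = ∑ a ∈ V, (s.filter (fun i => a ∈ X i)).card := by
  simp only [Finset.card_filter]
  exact Finset.sum_comm

private lemma erase_biUnion_le (X : ι → Finset α) (s : Finset ι) {i : ι} (hi : i ∈ s)
    (W : Finset α) (hWU : W ⊆ s.biUnion X)
    (hWX : ∀ a ∈ W, a ∈ X i ∧ (s.filter (fun j => a ∈ X j)).card = 1) :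
    ((s.erase i).biUnion X).card ≤ (s.biUnion X).card - W.card := by
  have hsub : (s.erase i).biUnion X ⊆ (s.biUnion X) \ W := by
    intro b hb
    obtain ⟨j, hj, hbj⟩ := Finset.mem_biUnion.mp hb
    have hjs : j ∈ s := Finset.mem_of_mem_erase hj
    have hji : j ≠ i := Finset.ne_of_mem_erase hj
    refine Finset.mem_sdiff.mpr ⟨Finset.mem_biUnion.mpr ⟨j, hjs, hbj⟩, fun hbW => ?_⟩
    obtain ⟨hbi, hb1⟩ := hWX b hbW
    have h2 : 1 < (s.filter (fun j => b ∈ X j)).card :=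
      Finset.one_lt_card.mpr ⟨i, Finset.mem_filter.mpr ⟨hi, hbi⟩, j,
        Finset.mem_filter.mpr ⟨hjs, hbj⟩, hji.symm⟩
    omega
  calc ((s.erase i).biUnion X).card ≤ ((s.biUnion X) \ W).card := Finset.card_le_card hsub
    _ = (s.biUnion X).card - W.card := Finset.card_sdiff_of_subset hWU

private lemma exists_good_last (X : ι → Finset α) (h3 : ∀ i, (X i).card ≤ 3)
    (s : Finset ι) (hs : s.Nonempty)
    (hN : (s.biUnion X).card ≤ 2 * s.card + 1) :
    ∃ i ∈ s, ((s.erase i).biUnion X).card ≤ 2 * (s.card - 1) + 1 := by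
  classical
  set U := s.biUnion X with hU
  set d : α → ℕ := fun a => (s.filter (fun i => a ∈ X i)).card with hdd
  have ht : 1 ≤ s.card := Finset.card_pos.mpr hs
  by_cases hsmall : U.card < 2 * s.card
  · obtain ⟨i, hi⟩ := hs
    refine ⟨i, hi, ?_⟩
    have hsub : (s.erase i).biUnion X ⊆ U :=
      Finset.biUnion_subset_biUnion_of_subset_left X (Finset.erase_subset i s)
    have := Finset.card_le_card hsub
    omega
  -- now 2 * s.card ≤ U.card ≤ 2 * s.card + 1
  push_neg at hsmall
  -- total degree sum
  have hsum3 : ∑ a ∈ U, d a ≤ 3 * s.card := by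
    have he : ∑ a ∈ U, d a = ∑ i ∈ s, (U.filter (fun a => a ∈ X i)).card :=
      (sum_filter_card_eq X s U).symm
    rw [he]
    calc ∑ i ∈ s, (U.filter (fun a => a ∈ X i)).card
        ≤ ∑ i ∈ s, 3 := by
          refine Finset.sum_le_sum fun i hi => ?_
          exact le_trans (Finset.card_le_card (fun a ha => (Finset.mem_filter.mp ha).2)) (h3 i)
      _ = 3 * s.card := by rw [Finset.sum_const, smul_eq_mul, mul_comm]
  set U₁ := U.filter (fun a => d a = 1) with hU₁
  have hd1 : ∀ a ∈ U, 1 ≤ d a := by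
    intro a ha
    obtain ⟨i, hi, hai⟩ := Finset.mem_biUnion.mp ha
    have : i ∈ s.filter (fun i => a ∈ X i) := Finset.mem_filter.mpr ⟨hi, hai⟩
    exact Finset.card_pos.mpr ⟨i, this⟩
  have hsplit : ∑ a ∈ U₁, d a + ∑ a ∈ U.filter (fun a => ¬ d a = 1), d a = ∑ a ∈ U, d a :=
    Finset.sum_filter_add_sum_filter_not U _ d
  have hU₁sum : ∑ a ∈ U₁, d a = U₁.card := by
    rw [Finset.card_eq_sum_ones]
    refine Finset.sum_congr rfl fun a ha => (Finset.mem_filter.mp ha).2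
  have hU₂sum : 2 * (U.filter (fun a => ¬ d a = 1)).card ≤ ∑ a ∈ U.filter (fun a => ¬ d a = 1), d a := by
    rw [Finset.card_eq_sum_ones, Finset.mul_sum]
    refine Finset.sum_le_sum fun a ha => ?_
    obtain ⟨haU, hane⟩ := Finset.mem_filter.mp ha
    have := hd1 a haU
    omega
  have hcards : U₁.card + (U.filter (fun a => ¬ d a = 1)).card = U.card :=
    Finset.card_filter_add_card_filter_not _
  have hU₁big : 2 * U.card ≤ 3 * s.card + U₁.card := by omega
  -- pigeonhole
  have hUsum1 : ∑ i ∈ s, (U₁.filter (fun a => a ∈ X i)).card = U₁.card := by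
    rw [sum_filter_card_eq, Finset.card_eq_sum_ones]
    refine Finset.sum_congr rfl fun a ha => (Finset.mem_filter.mp ha).2
  have hWmain : ∀ i ∈ s, ∀ r : ℕ, r ≤ (U₁.filter (fun a => a ∈ X i)).card →
      ((s.erase i).biUnion X).card ≤ U.card - r := by
    intro i hi r hr
    have := erase_biUnion_le X s hi (U₁.filter (fun a => a ∈ X i))
      (fun a ha => (Finset.mem_filter.mp (Finset.mem_filter.mp ha).1).1)
      (fun a ha => ⟨(Finset.mem_filter.mp ha).2,
        (Finset.mem_filter.mp (Finset.mem_filter.mp ha).1).2⟩)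
    rw [← hU] at this
    omega
  by_cases hcase : U.card = 2 * s.card
  · -- need i with at least 1 unique element
    have hpos : 0 < U₁.card := by omega
    have : ∃ i ∈ s, 1 ≤ (U₁.filter (fun a => a ∈ X i)).card := by
      by_contra hcon
      push_neg at hcon
      have : ∑ i ∈ s, (U₁.filter (fun a => a ∈ X i)).card = 0 := by
        refine Finset.sum_eq_zero fun i hi => by have := hcon i hi; omega
      omega
    obtain ⟨i, hi, hr⟩ := this
    exact ⟨i, hi, le_trans (hWmain i hi 1 hr) (by omega)⟩
  · -- U.card = 2 * s.card + 1 ; need i with at least 2 unique elements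
    have hceq : U.card = 2 * s.card + 1 := by omega
    have hU₁big2 : s.card + 2 ≤ U₁.card := by omega
    have : ∃ i ∈ s, 2 ≤ (U₁.filter (fun a => a ∈ X i)).card := by
      by_contra hcon
      push_neg at hcon
      have hle : ∑ i ∈ s, (U₁.filter (fun a => a ∈ X i)).card ≤ ∑ i ∈ s, 1 :=
        Finset.sum_le_sum fun i hi => by have := hcon i hi; omega
      rw [Finset.sum_const, smul_eq_mul, mul_one] at hle
      omega
    obtain ⟨i, hi, hr⟩ := this
    exact ⟨i, hi, le_trans (hWmain i hi 2 hr) (by omega)⟩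

private lemma exists_good_list (X : ι → Finset α) (h3 : ∀ i, (X i).card ≤ 3) :
    ∀ s : Finset ι, (s.biUnion X).card ≤ 2 * s.card + 1 →
      ∃ l : List ι, l.Nodup ∧ l.toFinset = s ∧
        ∀ k, (((l.take k).toFinset).biUnion X).card ≤ 2 * k + 1 := by
  intro s
  induction s using Finset.strongInduction with
  | _ s ih =>
    intro hN
    rcases s.eq_empty_or_nonempty with hse | hse
    · subst hse
      exact ⟨[], List.nodup_nil, by simp, fun k => by simp⟩
    · obtain ⟨i, hi, hle⟩ := exists_good_last X h3 s hse hN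
      have hcard : (s.erase i).card = s.card - 1 := Finset.card_erase_of_mem hi
      obtain ⟨l', hnd', htf', hpre'⟩ := ih (s.erase i) (Finset.erase_ssubset hi)
        (by rw [hcard]; exact hle)
      refine ⟨l' ++ [i], ?_, ?_, ?_⟩
      · have hinotin : i ∉ l' := by
          intro hmem
          have : i ∈ s.erase i := htf' ▸ List.mem_toFinset.mpr hmem
          exact (Finset.notMem_erase i s) this
        simp [List.nodup_append, hnd', hinotin]
        exact fun a ha h => hinotin (h ▸ ha)
      · rw [List.toFinset_append, htf']
        have h1 : [i].toFinset = {i} := by simp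
        rw [h1]
        ext j
        by_cases hji : j = i <;> simp [hji, hi, Finset.mem_erase]
      · intro k
        by_cases hk : k ≤ l'.length
        · rw [List.take_append_of_le_length hk]
          exact hpre' k
        · push_neg at hk
          have hlen : l'.length = s.card - 1 := by
            rw [← List.toFinset_card_of_nodup hnd', htf', hcard]
          have hsub : ((l' ++ [i]).take k).toFinset ⊆ s := by
            intro j hj
            have : j ∈ l' ++ [i] := List.mem_of_mem_take (List.mem_toFinset.mp hj)
            rcases List.mem_append.mp this with h | h
            · exact Finset.mem_of_mem_erase (htf' ▸ List.mem_toFinset.mpr h)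
            · simp at h; subst h; exact hi
          have hc : (((l' ++ [i]).take k).toFinset.biUnion X).card ≤ (s.biUnion X).card :=
            Finset.card_le_card (Finset.biUnion_subset_biUnion_of_subset_left X hsub)
          have hkk : s.card ≤ k := by omega
          omega

private lemma exists_good_perm {m : ℕ} (X : Fin m → Finset α) (h3 : ∀ i, (X i).card ≤ 3)
    (hN : ((univ : Finset (Fin m)).biUnion X).card ≤ 2 * m + 1) :
    ∃ π : Equiv.Perm (Fin m), ∀ k, (unionUpTo X π k).card ≤ 2 * k + 1 := by
  obtain ⟨l, hnd, htf, hpre⟩ := exists_good_list X h3 univ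
    (by rwa [Finset.card_univ, Fintype.card_fin])
  have hlen : l.length = m := by
    rw [← List.toFinset_card_of_nodup hnd, htf, Finset.card_univ, Fintype.card_fin]
  set f : Fin m → Fin m := fun j => l.get (Fin.cast hlen.symm j) with hf
  have hinj : Function.Injective f :=
    (List.nodup_iff_injective_get.mp hnd).comp (Fin.cast_injective hlen.symm)
  refine ⟨Equiv.ofBijective f (Finite.injective_iff_bijective.mp hinj), fun k => ?_⟩
  have hkey : unionUpTo X (Equiv.ofBijective f (Finite.injective_iff_bijective.mp hinj)) k
      = ((l.take k).toFinset).biUnion X := by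
    ext a
    simp only [unionUpTo, Finset.mem_biUnion, Finset.mem_filter, Finset.mem_univ, true_and,
      List.mem_toFinset, Equiv.ofBijective_apply]
    constructor
    · rintro ⟨i, hik, ha⟩
      refine ⟨f i, ?_, ha⟩
      have hilen : (i : ℕ) < (l.take k).length := by
        rw [List.length_take]
        exact lt_min hik (by rw [hlen]; exact i.isLt)
      refine List.mem_iff_getElem.mpr ⟨i, hilen, ?_⟩
      rw [List.getElem_take]
      rfl
    · rintro ⟨j, hj, ha⟩
      obtain ⟨idx, hidx, hval⟩ := List.mem_iff_getElem.mp hj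
      rw [List.length_take] at hidx
      refine ⟨⟨idx, by omega⟩, by simp; omega, ?_⟩
      have : f ⟨idx, by omega⟩ = j := by
        rw [hf]
        simp only
        rw [← hval, List.getElem_take]
        rfl
      rw [this]; exact ha
  rw [hkey]
  exact hpre k

end AuxProof

/-- For `m ≥ ⌈(n−1)/2⌉`, `f₃(n,m) ≤ ⌊(n+1)/2⌋`. -/
theorem f3_upper_bound_many_sets (n m : ℕ) (hn : 1 ≤ n) (hm' : 1 ≤ m)
    (hm : ⌈((n : ℚ) - 1) / 2⌉ ≤ (m : ℤ)) :
    fFam n m 3 ≤ ⌊((n : ℚ) + 1) / 2⌋ := by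
  set B : ℤ := ⌊((n : ℚ) + 1) / 2⌋ with hB
  have hnm : (n : ℤ) ≤ 2 * m + 1 := by
    have h1 : ((n : ℚ) - 1) / 2 ≤ ((m : ℤ) : ℚ) := le_trans (Int.le_ceil _) (by exact_mod_cast hm)
    have h2 : (n : ℚ) ≤ 2 * ((m : ℤ) : ℚ) + 1 := by linarith
    exact_mod_cast h2
  have hnB : (n : ℤ) ≤ 2 * B := by
    have h1 : ((n : ℚ) + 1) / 2 - 1 < (B : ℚ) := Int.sub_one_lt_floor _
    have h2 : (n : ℚ) - 1 < 2 * (B : ℚ) := by linarith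
    have h3 : (n : ℤ) - 1 < 2 * B := by exact_mod_cast h2
    omega
  apply csSup_le
  · exact ⟨DeltaMin (fun _ : Fin m => (∅ : Finset (Fin n))), fun _ : Fin m => ∅,
      fun i => by simp, rfl⟩
  rintro d ⟨X, h3, rfl⟩
  have hcard_le : ∀ (σ : Equiv.Perm (Fin m)) (k : ℕ), (unionUpTo X σ k).card ≤ n := by
    intro σ k
    have h := Finset.card_le_univ (unionUpTo X σ k)
    simpa using h
  have hN : ((univ : Finset (Fin m)).biUnion X).card ≤ 2 * m + 1 := by
    have h1 : ((univ : Finset (Fin m)).biUnion X).card ≤ n := by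
      have h := Finset.card_le_univ ((univ : Finset (Fin m)).biUnion X)
      simpa using h
    have h2 : n ≤ 2 * m + 1 := by exact_mod_cast hnm
    omega
  obtain ⟨π, hπ⟩ := exists_good_perm X h3 hN
  have hdelta : ∀ k : ℕ, 1 ≤ k → k ≤ m → delta X π k ≤ B := by
    intro k hk1 hkm
    unfold delta
    have h1 : ((unionUpTo X π k).card : ℤ) ≤ 2 * k + 1 := by exact_mod_cast hπ k
    have h2 : ((unionUpTo X π k).card : ℤ) ≤ n := by exact_mod_cast hcard_le π k
    by_cases hkB : (k : ℤ) + 1 ≤ B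
    · linarith
    · push_neg at hkB
      linarith
  have hPerm : DeltaPerm X π ≤ B := by
    apply csSup_le
    · exact ⟨delta X π 1, 1, le_refl 1, hm', rfl⟩
    · rintro d ⟨k, hk1, hkm, rfl⟩
      exact hdelta k hk1 hkm
  have hbdd : BddBelow {d : ℤ | ∃ σ : Equiv.Perm (Fin m), d = DeltaPerm X σ} := by
    refine ⟨-1, ?_⟩
    rintro d ⟨σ, rfl⟩
    have hbdd2 : BddAbove {d : ℤ | ∃ k : ℕ, 1 ≤ k ∧ k ≤ m ∧ d = delta X σ k} := by
      refine ⟨n, ?_⟩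
      rintro d ⟨k, hk1, hkm, rfl⟩
      unfold delta
      have h2 : ((unionUpTo X σ k).card : ℤ) ≤ n := by exact_mod_cast hcard_le σ k
      have h3 : (0 : ℤ) ≤ (k : ℤ) := Int.ofNat_nonneg k
      linarith
    have hmem : delta X σ 1 ∈ {d : ℤ | ∃ k : ℕ, 1 ≤ k ∧ k ≤ m ∧ d = delta X σ k} :=
      ⟨1, le_refl 1, hm', rfl⟩
    have hge : delta X σ 1 ≤ DeltaPerm X σ := le_csSup hbdd2 hmem
    have hd1 : (-1 : ℤ) ≤ delta X σ 1 := by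
      unfold delta
      have : (0 : ℤ) ≤ ((unionUpTo X σ 1).card : ℤ) := Int.ofNat_nonneg _
      push_cast
      linarith
    exact le_trans hd1 hge
  calc DeltaMin X ≤ DeltaPerm X π := csInf_le hbdd ⟨π, rfl⟩
    _ ≤ B := hPerm
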